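/- For σ > 0, the two constants c₀ = ∑_{x∈ℤ} exp(-x²/(2·(√2σ)²)) and c_{1/2} = ∑_{x∈ℤ} exp(-(x+1/2)²/(2·(√2σ)²)) satisfy c₀ > c_{1/2}; that is, the discrete Gaussian theta sum centered at a half-integer is strictly smaller than at an integer. -/

import Mathlib

open Real Complex

private lemma summable_gauss' {A : ℝ} (hA : 0 < A) :
    Summable (fun n : ℤ => Real.exp (-A * (n : ℝ) ^ 2)) := by
  have h := summable_pow_mul_jacobiTheta₂_term_bound 0 (div_pos hA pi_pos) 0
  refine h.congr fun n => ?_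
  rw [pow_zero, one_mul]
  congr 1
  field_simp
  ring

private lemma zero_eq' {c : ℝ} (hc : 0 < c) :
    (∑' n : ℤ, Real.exp (-(n : ℝ) ^ 2 / c)) =
      (π * c) ^ ((1:ℝ)/2) * ∑' n : ℤ, Real.exp (-(π ^ 2 * c) * (n : ℝ) ^ 2) := by
  have hπc : (0:ℝ) < π * c := mul_pos Real.pi_pos hc
  have key := Complex.tsum_exp_neg_quadratic (a := ((π * c : ℝ) : ℂ))
    (by simpa using hπc) 0
  have h1 : ∀ n : ℤ, Complex.exp (-(π:ℂ) * ((π * c : ℝ) : ℂ) * (n:ℂ) ^ 2 + 2 * π * 0 * n)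
      = ((Real.exp (-(π ^ 2 * c) * (n : ℝ) ^ 2) : ℝ) : ℂ) := by
    intro n
    rw [Complex.ofReal_exp]
    congr 1
    push_cast
    ring
  have h2 : ∀ n : ℤ, Complex.exp (-(π:ℂ) / ((π * c : ℝ) : ℂ) * ((n:ℂ) + I * 0) ^ 2)
      = ((Real.exp (-(n : ℝ) ^ 2 / c) : ℝ) : ℂ) := by
    intro n
    rw [Complex.ofReal_exp]
    congr 1
    have hπ : (π : ℂ) ≠ 0 := Complex.ofReal_ne_zero.mpr Real.pi_ne_zero
    have hcne : (c : ℂ) ≠ 0 := Complex.ofReal_ne_zero.mpr hc.ne'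
    push_cast
    field_simp
    ring
  simp_rw [h1, h2] at key
  rw [← Complex.ofReal_tsum, ← Complex.ofReal_tsum,
    show ((1:ℂ)/2) = (((1:ℝ)/2 : ℝ) : ℂ) by norm_num,
    ← Complex.ofReal_cpow hπc.le] at key
  set K : ℝ := (π * c) ^ ((1:ℝ)/2) with hK
  have hKpos : 0 < K := Real.rpow_pos_of_pos hπc _
  rw [show (1:ℂ) / (K:ℂ) * ((∑' n : ℤ, Real.exp (-(n:ℝ)^2/c) : ℝ) : ℂ)
      = ((1/K * ∑' n : ℤ, Real.exp (-(n:ℝ)^2/c) : ℝ) : ℂ) by push_cast; ring] at key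
  have key' := Complex.ofReal_inj.mp key
  rw [key', ← mul_assoc, mul_one_div, div_self hKpos.ne', one_mul]

private lemma half_eq' {c : ℝ} (hc : 0 < c) :
    (∑' n : ℤ, Real.exp (-((n : ℝ) + 1/2) ^ 2 / c)) =
      (π * c) ^ ((1:ℝ)/2) *
        ∑' n : ℤ, (-1 : ℝ) ^ n * Real.exp (-(π ^ 2 * c) * (n : ℝ) ^ 2) := by
  have hπc : (0:ℝ) < π * c := mul_pos Real.pi_pos hc
  have key := Complex.tsum_exp_neg_quadratic (a := ((π * c : ℝ) : ℂ))
    (by simpa using hπc) (-I/2)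
  have h1 : ∀ n : ℤ, Complex.exp (-(π:ℂ) * ((π * c : ℝ) : ℂ) * (n:ℂ) ^ 2 + 2 * π * (-I/2) * n)
      = (((-1 : ℝ) ^ n * Real.exp (-(π ^ 2 * c) * (n : ℝ) ^ 2) : ℝ) : ℂ) := by
    intro n
    rw [show (-(π:ℂ) * ((π * c : ℝ) : ℂ) * (n:ℂ) ^ 2 + 2 * π * (-I/2) * n)
        = ((-(π ^ 2 * c) * (n : ℝ) ^ 2 : ℝ) : ℂ) + (n : ℤ) * (-(π * I)) by push_cast; ring,
      Complex.exp_add, Complex.exp_int_mul]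
    have : Complex.exp (-(π * I)) = -1 := by
      rw [Complex.exp_neg, Complex.exp_pi_mul_I]
      norm_num
    rw [this]
    push_cast
    exact mul_comm _ _
  have h2 : ∀ n : ℤ, Complex.exp (-(π:ℂ) / ((π * c : ℝ) : ℂ) * ((n:ℂ) + I * (-I/2)) ^ 2)
      = ((Real.exp (-((n : ℝ) + 1/2) ^ 2 / c) : ℝ) : ℂ) := by
    intro n
    rw [Complex.ofReal_exp]
    congr 1
    have hπ : (π : ℂ) ≠ 0 := Complex.ofReal_ne_zero.mpr Real.pi_ne_zero
    have hcne : (c : ℂ) ≠ 0 := Complex.ofReal_ne_zero.mpr hc.ne'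
    rw [show (n:ℂ) + I * (-I/2) = (((n : ℝ) + 1/2 : ℝ) : ℂ) by
      push_cast
      linear_combination (-1/2 : ℂ) * Complex.I_sq]
    push_cast
    field_simp
  simp_rw [h1, h2] at key
  rw [← Complex.ofReal_tsum, ← Complex.ofReal_tsum,
    show ((1:ℂ)/2) = (((1:ℝ)/2 : ℝ) : ℂ) by norm_num,
    ← Complex.ofReal_cpow hπc.le] at key
  set K : ℝ := (π * c) ^ ((1:ℝ)/2) with hK
  have hKpos : 0 < K := Real.rpow_pos_of_pos hπc _
  rw [show (1:ℂ) / (K:ℂ) * ((∑' n : ℤ, Real.exp (-((n:ℝ)+1/2)^2/c) : ℝ) : ℂ)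
      = ((1/K * ∑' n : ℤ, Real.exp (-((n:ℝ)+1/2)^2/c) : ℝ) : ℂ) by push_cast; ring] at key
  have key' := Complex.ofReal_inj.mp key
  rw [key', ← mul_assoc, mul_one_div, div_self hKpos.ne', one_mul]

theorem theta_integer_center_gt_half_integer (σ : ℝ) (hσ : 0 < σ) :
    (∑' x : ℤ, Real.exp (-(x : ℝ)^2 / (4 * σ^2))) >
      ∑' x : ℤ, Real.exp (-((x : ℝ) + 1/2)^2 / (4 * σ^2)) := by
  have hc : (0:ℝ) < 4 * σ ^ 2 := by positivity
  rw [zero_eq' hc, half_eq' hc]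
  set A : ℝ := π ^ 2 * (4 * σ ^ 2) with hAdef
  have hA : 0 < A := by positivity
  have hsE : Summable (fun n : ℤ => Real.exp (-A * (n : ℝ) ^ 2)) := summable_gauss' hA
  have hK : (0:ℝ) < (π * (4 * σ ^ 2)) ^ ((1:ℝ)/2) := by
    apply Real.rpow_pos_of_pos
    positivity
  have hle : ∀ n : ℤ, (-1 : ℝ) ^ n * Real.exp (-A * (n : ℝ) ^ 2)
      ≤ Real.exp (-A * (n : ℝ) ^ 2) := by
    intro n
    rcases Int.even_or_odd n with h | h
    · rw [h.neg_one_zpow, one_mul]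
    · rw [h.neg_one_zpow]
      nlinarith [Real.exp_pos (-A * (n : ℝ) ^ 2)]
  have hlt : (-1 : ℝ) ^ (1:ℤ) * Real.exp (-A * ((1:ℤ) : ℝ) ^ 2)
      < Real.exp (-A * ((1:ℤ) : ℝ) ^ 2) := by
    rw [zpow_one]
    nlinarith [Real.exp_pos (-A * ((1:ℤ) : ℝ) ^ 2)]
  have hsF : Summable (fun n : ℤ => (-1 : ℝ) ^ n * Real.exp (-A * (n : ℝ) ^ 2)) := by
    refine hsE.of_norm_bounded fun n => ?_
    rw [norm_mul, norm_zpow]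
    simp [abs_of_pos (Real.exp_pos _)]
  exact mul_lt_mul_of_pos_left (Summable.tsum_lt_tsum hle hlt hsF hsE) hK
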